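/- arXiv:1903.09218 — 3 statements merged into one kernel-verified Lean document; each statement's English description precedes it below -/
import Mathlib

section
/- (Variant ξ of the Casimir element.) As ℝ-linear endomorphisms of ℝ[x₁,x₂,x₃], one has the operator identity D₀∘D₁∘D₂ + D₁∘D₂∘D₀ + D₂∘D₀∘D₁ − D₀∘D₂∘D₁ − D₁∘D₀∘D₂ − D₂∘D₁∘D₀ = D₀∘D₀ + D₁∘D₁ + D₂∘D₂. -/
open MvPolynomial

lemma pd_comm (i j : Fin 3) (p : MvPolynomial (Fin 3) ℝ) :
    pderiv i (pderiv j p) = pderiv j (pderiv i p) := by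
  induction p using MvPolynomial.induction_on with
  | C a => simp
  | add p q hp hq => simp [hp, hq]
  | mul_X p k hp =>
    classical
    simp only [pderiv_mul, pderiv_X, map_add, hp, Pi.single_apply, apply_ite (pderiv i),
      apply_ite (pderiv j), map_one, map_zero, Derivation.map_one_eq_zero, ite_self]
    ring

/-- Directional derivative along `f₀ = (x₂, −x₁, 0)`. -/
noncomputable def D0 : Module.End ℝ (MvPolynomial (Fin 3) ℝ) :=
  (LinearMap.mulLeft ℝ (X 1 : MvPolynomial (Fin 3) ℝ)).comp (pderiv 0).toLinearMap
    - (LinearMap.mulLeft ℝ (X 0 : MvPolynomial (Fin 3) ℝ)).comp (pderiv 1).toLinearMap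

/-- Directional derivative along `f₁ = (x₃, 0, −x₁)`. -/
noncomputable def D1 : Module.End ℝ (MvPolynomial (Fin 3) ℝ) :=
  (LinearMap.mulLeft ℝ (X 2 : MvPolynomial (Fin 3) ℝ)).comp (pderiv 0).toLinearMap
    - (LinearMap.mulLeft ℝ (X 0 : MvPolynomial (Fin 3) ℝ)).comp (pderiv 2).toLinearMap

/-- Directional derivative along `f₂ = (0, x₃, −x₂)`. -/
noncomputable def D2 : Module.End ℝ (MvPolynomial (Fin 3) ℝ) :=
  (LinearMap.mulLeft ℝ (X 2 : MvPolynomial (Fin 3) ℝ)).comp (pderiv 1).toLinearMap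
    - (LinearMap.mulLeft ℝ (X 1 : MvPolynomial (Fin 3) ℝ)).comp (pderiv 2).toLinearMap

lemma comm12 : D1 * D2 - D2 * D1 = D0 := by
  refine LinearMap.ext fun p => ?_
  simp only [D0, D1, D2, LinearMap.sub_apply, Module.End.mul_apply, LinearMap.comp_apply,
    LinearMap.mulLeft_apply, Derivation.coeFn_coe, map_sub, pderiv_mul,
    pderiv_X_self, pderiv_X_of_ne (by decide : (2:Fin 3) ≠ 0),
    pderiv_X_of_ne (by decide : (2:Fin 3) ≠ 1), pderiv_X_of_ne (by decide : (0:Fin 3) ≠ 1),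
    pderiv_X_of_ne (by decide : (0:Fin 3) ≠ 2), pderiv_X_of_ne (by decide : (1:Fin 3) ≠ 0),
    pderiv_X_of_ne (by decide : (1:Fin 3) ≠ 2),
    pd_comm 1 0 p, pd_comm 2 0 p, pd_comm 2 1 p]
  ring

lemma comm20 : D2 * D0 - D0 * D2 = D1 := by
  refine LinearMap.ext fun p => ?_
  simp only [D0, D1, D2, LinearMap.sub_apply, Module.End.mul_apply, LinearMap.comp_apply,
    LinearMap.mulLeft_apply, Derivation.coeFn_coe, map_sub, pderiv_mul,
    pderiv_X_self, pderiv_X_of_ne (by decide : (2:Fin 3) ≠ 0),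
    pderiv_X_of_ne (by decide : (2:Fin 3) ≠ 1), pderiv_X_of_ne (by decide : (0:Fin 3) ≠ 1),
    pderiv_X_of_ne (by decide : (0:Fin 3) ≠ 2), pderiv_X_of_ne (by decide : (1:Fin 3) ≠ 0),
    pderiv_X_of_ne (by decide : (1:Fin 3) ≠ 2),
    pd_comm 1 0 p, pd_comm 2 0 p, pd_comm 2 1 p]
  ring

lemma comm01 : D0 * D1 - D1 * D0 = D2 := by
  refine LinearMap.ext fun p => ?_
  simp only [D0, D1, D2, LinearMap.sub_apply, Module.End.mul_apply, LinearMap.comp_apply,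
    LinearMap.mulLeft_apply, Derivation.coeFn_coe, map_sub, pderiv_mul,
    pderiv_X_self, pderiv_X_of_ne (by decide : (2:Fin 3) ≠ 0),
    pderiv_X_of_ne (by decide : (2:Fin 3) ≠ 1), pderiv_X_of_ne (by decide : (0:Fin 3) ≠ 1),
    pderiv_X_of_ne (by decide : (0:Fin 3) ≠ 2), pderiv_X_of_ne (by decide : (1:Fin 3) ≠ 0),
    pderiv_X_of_ne (by decide : (1:Fin 3) ≠ 2),
    pd_comm 1 0 p, pd_comm 2 0 p, pd_comm 2 1 p]
  ring

/-- The variant `ξ` of the Casimir element agrees with the Casimir operator. -/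
theorem xi_equals_casimir :
    D0 ∘ₗ D1 ∘ₗ D2 + D1 ∘ₗ D2 ∘ₗ D0 + D2 ∘ₗ D0 ∘ₗ D1
      - D0 ∘ₗ D2 ∘ₗ D1 - D1 ∘ₗ D0 ∘ₗ D2 - D2 ∘ₗ D1 ∘ₗ D0
      = D0 ∘ₗ D0 + D1 ∘ₗ D1 + D2 ∘ₗ D2 := by
  simp only [← Module.End.mul_eq_comp]
  calc D0 * (D1 * D2) + D1 * (D2 * D0) + D2 * (D0 * D1)
        - D0 * (D2 * D1) - D1 * (D0 * D2) - D2 * (D1 * D0)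
      = D0 * (D1 * D2 - D2 * D1) + D1 * (D2 * D0 - D0 * D2) + D2 * (D0 * D1 - D1 * D0) := by
        rw [mul_sub, mul_sub, mul_sub]; abel
    _ = D0 * D0 + D1 * D1 + D2 * D2 := by rw [comm12, comm20, comm01]
end

section
/- (Density of the algebra generated by mξ and mζ.) Let a₁ < b₁ and 0 < a₂ < b₂ be real numbers and Σ = [a₁,b₁] × [a₂,b₂] ⊆ ℝ² (a compact topological space). Then the non-unital subalgebra of the space C(Σ, ℝ) of continuous real-valued functions on Σ generated by the two functions σ ↦ mξ(σ) and σ ↦ mζ(σ) is dense in C(Σ, ℝ) with respect to the uniform (sup-norm) topology. -/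
/-- The monomial `mξ(σ) = σ₁·σ₂²`. -/
def mXi (σ : ℝ × ℝ) : ℝ := σ.1 * σ.2 ^ 2

/-- The monomial `mζ(σ) = σ₂⁴`. -/
def mZeta (σ : ℝ × ℝ) : ℝ := σ.2 ^ 4

theorem mXi_continuous : Continuous mXi := by
  unfold mXi; fun_prop

theorem mZeta_continuous : Continuous mZeta := by
  unfold mZeta; fun_prop

/-- The (non-unital) algebra of functions generated by `mξ` and `mζ` is dense in
`C(Σ, ℝ)` for `Σ = [a₁,b₁] × [a₂,b₂]` with `a₁ < b₁` and `0 < a₂ < b₂`. -/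
theorem adjoin_mXi_mZeta_dense (a₁ b₁ a₂ b₂ : ℝ) (hab₁ : a₁ < b₁)
    (ha₂ : 0 < a₂) (hab₂ : a₂ < b₂) :
    Dense ((NonUnitalAlgebra.adjoin ℝ
        ({⟨fun σ => mXi σ.1, mXi_continuous.comp continuous_subtype_val⟩,
          ⟨fun σ => mZeta σ.1, mZeta_continuous.comp continuous_subtype_val⟩} :
        Set C(↥(Set.Icc a₁ b₁ ×ˢ Set.Icc a₂ b₂), ℝ))) :
      Set C(↥(Set.Icc a₁ b₁ ×ˢ Set.Icc a₂ b₂), ℝ)) := by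
  haveI : CompactSpace ↥(Set.Icc a₁ b₁ ×ˢ Set.Icc a₂ b₂) :=
    isCompact_iff_compactSpace.mp (isCompact_Icc.prod isCompact_Icc)
  set X := ↥(Set.Icc a₁ b₁ ×ˢ Set.Icc a₂ b₂)
  set F : C(X, ℝ) := ⟨fun σ => mXi σ.1, mXi_continuous.comp continuous_subtype_val⟩
  set G : C(X, ℝ) := ⟨fun σ => mZeta σ.1, mZeta_continuous.comp continuous_subtype_val⟩
  set S : NonUnitalSubalgebra ℝ C(X, ℝ) := NonUnitalAlgebra.adjoin ℝ {F, G}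
  set T : NonUnitalSubalgebra ℝ C(X, ℝ) := S.topologicalClosure
  -- basic bounds on G
  have hGx : ∀ x : X, a₂ ^ 4 ≤ G x ∧ G x ≤ b₂ ^ 4 := by
    intro x
    obtain ⟨-, hx2⟩ := x.2
    obtain ⟨h1, h2⟩ := hx2
    constructor
    · exact pow_le_pow_left₀ ha₂.le h1 4
    · exact pow_le_pow_left₀ (ha₂.le.trans h1) h2 4
  -- the key: 1 belongs to the closure T
  have hM : (0:ℝ) < b₂ ^ 4 + 1 := by positivity
  set M : ℝ := b₂ ^ 4 + 1 with hMdef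
  set u : C(X, ℝ) := 1 - M⁻¹ • G with hu
  set r : ℝ := 1 - a₂ ^ 4 / M with hr
  have ha4 : (0:ℝ) < a₂ ^ 4 := by positivity
  have hrange : ∀ x : X, 0 ≤ u x ∧ u x ≤ r := by
    intro x
    obtain ⟨h1, h2⟩ := hGx x
    have hx : u x = 1 - G x / M := by
      simp [hu, div_eq_inv_mul]
    constructor
    · rw [hx]; rw [sub_nonneg]
      rw [div_le_one hM]
      linarith
    · rw [hx, hr]
      have : a₂ ^ 4 / M ≤ G x / M := by gcongr
      linarith
  have hr0 : 0 ≤ r := by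
    rw [hr]
    have hab4 : a₂ ^ 4 ≤ b₂ ^ 4 := pow_le_pow_left₀ ha₂.le hab₂.le 4
    have : a₂ ^ 4 / M ≤ 1 := by
      rw [div_le_one hM]; linarith
    linarith
  have hr1 : r < 1 := by
    rw [hr]
    have : 0 < a₂ ^ 4 / M := by positivity
    linarith
  have hmem : ∀ n : ℕ, (1 - u ^ n : C(X, ℝ)) ∈ S := by
    intro n
    induction n with
    | zero => simpa using zero_mem S
    | succ n ih =>
      have hG : G ∈ S := NonUnitalAlgebra.subset_adjoin ℝ (by simp)
      have key : (1 - u ^ (n+1) : C(X, ℝ))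
          = (1 - u ^ n) + (M⁻¹ • G - (1 - u ^ n) * (M⁻¹ • G)) := by
        ring_nf
        rw [hu]; ring
      rw [key]
      exact add_mem ih (sub_mem (SMulMemClass.smul_mem _ hG)
        (mul_mem ih (SMulMemClass.smul_mem _ hG)))
  have hnorm : ∀ n : ℕ, ‖(u ^ n : C(X, ℝ))‖ ≤ r ^ n := by
    intro n
    apply ContinuousMap.norm_le _ (pow_nonneg hr0 n) |>.mpr
    intro x
    rw [ContinuousMap.pow_apply, Real.norm_eq_abs]
    rw [abs_of_nonneg (pow_nonneg (hrange x).1 n)]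
    exact pow_le_pow_left₀ (hrange x).1 (hrange x).2 n
  have htend : Filter.Tendsto (fun n : ℕ => (1 - u ^ n : C(X, ℝ))) Filter.atTop (nhds 1) := by
    have h0 : Filter.Tendsto (fun n : ℕ => (u ^ n : C(X, ℝ))) Filter.atTop (nhds 0) :=
      squeeze_zero_norm hnorm (tendsto_pow_atTop_nhds_zero_of_lt_one hr0 hr1)
    simpa using (tendsto_const_nhds (x := (1 : C(X, ℝ)))).sub h0
  have hone : (1 : C(X, ℝ)) ∈ T :=
    mem_closure_of_tendsto htend (Filter.Eventually.of_forall fun n => hmem n)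
  -- the unital algebra adjoin is contained in T
  have hsub : (Algebra.adjoin ℝ ({F, G} : Set C(X, ℝ)) : Set C(X, ℝ)) ⊆ (T : Set C(X, ℝ)) := by
    intro f hf
    induction hf using Algebra.adjoin_induction with
    | mem f hf =>
      exact S.le_topologicalClosure (NonUnitalAlgebra.subset_adjoin ℝ hf)
    | algebraMap c =>
      have : (algebraMap ℝ C(X, ℝ)) c = c • (1 : C(X, ℝ)) := by
        simp [Algebra.algebraMap_eq_smul_one]
      rw [this]
      exact SMulMemClass.smul_mem c hone
    | add f g _ _ hf hg => exact add_mem hf hg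
    | mul f g _ _ hf hg => exact mul_mem hf hg
  -- the unital adjoin separates points
  have hsep : (Algebra.adjoin ℝ ({F, G} : Set C(X, ℝ))).SeparatesPoints := by
    intro x y hxy
    have hFmem : F ∈ Algebra.adjoin ℝ ({F, G} : Set C(X, ℝ)) :=
      Algebra.subset_adjoin (by simp)
    have hGmem : G ∈ Algebra.adjoin ℝ ({F, G} : Set C(X, ℝ)) :=
      Algebra.subset_adjoin (by simp)
    by_cases hG : G x ≠ G y
    · exact ⟨G, ⟨G, hGmem, rfl⟩, hG⟩
    · push_neg at hG
      -- then the second coordinates coincide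
      have hx2 : (0:ℝ) < (x : ℝ × ℝ).2 := lt_of_lt_of_le ha₂ x.2.2.1
      have hy2 : (0:ℝ) < (y : ℝ × ℝ).2 := lt_of_lt_of_le ha₂ y.2.2.1
      have h2 : (x : ℝ × ℝ).2 = (y : ℝ × ℝ).2 := by
        have h4 : ((x : ℝ × ℝ).2) ^ 4 = ((y : ℝ × ℝ).2) ^ 4 := hG
        exact (pow_left_strictMonoOn₀ (four_ne_zero)).injOn hx2.le hy2.le h4
      have h1 : (x : ℝ × ℝ).1 ≠ (y : ℝ × ℝ).1 := by
        intro h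
        apply hxy
        exact Subtype.ext (Prod.ext h h2)
      refine ⟨F, ⟨F, hFmem, rfl⟩, ?_⟩
      show mXi (x : ℝ × ℝ) ≠ mXi (y : ℝ × ℝ)
      unfold mXi
      rw [h2]
      intro hcon
      exact h1 (mul_right_cancel₀ (by positivity) hcon)
  have htop := ContinuousMap.subalgebra_topologicalClosure_eq_top_of_separatesPoints _ hsep
  -- conclude
  rw [dense_iff_closure_eq]
  apply Set.eq_univ_of_univ_subset
  have hclosA : closure ((Algebra.adjoin ℝ ({F, G} : Set C(X, ℝ)) : Set C(X, ℝ))) = Set.univ := by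
    rw [← Subalgebra.topologicalClosure_coe, htop, Algebra.coe_top]
  calc Set.univ = closure ((Algebra.adjoin ℝ ({F, G} : Set C(X, ℝ)) : Set C(X, ℝ))) :=
        hclosA.symm
    _ ⊆ closure ((T : Set C(X, ℝ))) := closure_mono hsub
    _ ⊆ closure (S : Set C(X, ℝ)) := by
        rw [IsClosed.closure_eq]
        · exact subset_rfl
        · exact isClosed_closure
end

section
/- (Vanishing of moments against mξ and mζ implies vanishing.) Let a₁ < b₁ and 0 < a₂ < b₂ be real numbers and Σ = [a₁,b₁] × [a₂,b₂] ⊆ ℝ², and let ψ : ℝ² → ℝ be continuous. If for all natural numbers a, b with a + b ≥ 1 one has ∫_Σ σ₁^a · σ₂^(2a+4b) · ψ(σ) dσ = 0, where the integral is with respect to two-dimensional Lebesgue measure restricted to Σ, then ψ(σ) = 0 for every σ ∈ Σ. -/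
open MeasureTheory

set_option maxHeartbeats 2000000 in
/-- If a continuous function `ψ` on `Σ = [a₁,b₁] × [a₂,b₂]` (with `a₁ < b₁`,
`0 < a₂ < b₂`) has vanishing moments against all monomials `mξ^a·mζ^b = σ₁^a·σ₂^(2a+4b)`
with `a + b ≥ 1`, then `ψ` vanishes identically on `Σ`. -/
theorem vanishing_moments (a₁ b₁ a₂ b₂ : ℝ) (hab₁ : a₁ < b₁)
    (ha₂ : 0 < a₂) (hab₂ : a₂ < b₂) (ψ : ℝ × ℝ → ℝ) (hψ : Continuous ψ)
    (hmom : ∀ a b : ℕ, 1 ≤ a + b →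
      ∫ σ in Set.Icc a₁ b₁ ×ˢ Set.Icc a₂ b₂,
        σ.1 ^ a * σ.2 ^ (2 * a + 4 * b) * ψ σ = 0) :
    ∀ σ ∈ Set.Icc a₁ b₁ ×ˢ Set.Icc a₂ b₂, ψ σ = 0 := by
  set K : Set (ℝ × ℝ) := Set.Icc a₁ b₁ ×ˢ Set.Icc a₂ b₂ with hK
  have hKm : MeasurableSet K := (measurableSet_Icc).prod measurableSet_Icc
  have hKc : IsCompact K := (isCompact_Icc).prod isCompact_Icc
  haveI : CompactSpace K := isCompact_iff_compactSpace.mp hKc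
  set μX : Measure K := volume.comap Subtype.val with hμX
  haveI : IsFiniteMeasure μX := by
    constructor
    rw [hμX, MeasurableEmbedding.comap_apply (MeasurableEmbedding.subtype_coe hKm)]
    simpa using hKc.measure_lt_top
  -- every continuous function on K is integrable
  have hint : ∀ f : C(K, ℝ), Integrable f μX := fun f =>
    f.continuous.integrable_of_hasCompactSupport (HasCompactSupport.of_compactSpace f)
  -- positivity of second coordinate on K
  have hpos : ∀ x : K, 0 < (x : ℝ × ℝ).2 :=
    fun x => lt_of_lt_of_le ha₂ ((Set.mem_prod.mp x.prop).2.1)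
  -- the continuous maps u, v, G
  set u : C(K, ℝ) := ⟨fun x => (x : ℝ × ℝ).1 * (x : ℝ × ℝ).2 ^ 2,
    ((continuous_fst.comp continuous_subtype_val).mul
      ((continuous_snd.comp continuous_subtype_val).pow 2))⟩ with hu
  set v : C(K, ℝ) := ⟨fun x => (x : ℝ × ℝ).2 ^ 4,
    ((continuous_snd.comp continuous_subtype_val).pow 4)⟩ with hv
  set G : C(K, ℝ) := ⟨fun x => (x : ℝ × ℝ).2 ^ 4 * ψ (x : ℝ × ℝ),
    ((continuous_snd.comp continuous_subtype_val).pow 4).mul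
      (hψ.comp continuous_subtype_val)⟩ with hG
  set A : Subalgebra ℝ C(K, ℝ) := Algebra.adjoin ℝ {u, v} with hA
  -- A separates points
  have hsep : A.SeparatesPoints := by
    intro x y hxy
    by_cases h2 : (x : ℝ × ℝ).2 = (y : ℝ × ℝ).2
    · have h1 : (x : ℝ × ℝ).1 ≠ (y : ℝ × ℝ).1 := by
        intro h1
        exact hxy (Subtype.coe_injective (Prod.ext h1 h2))
      refine ⟨u, ⟨u, Algebra.subset_adjoin (by simp), rfl⟩, ?_⟩
      simp only [hu, ContinuousMap.coe_mk]
      rw [h2]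
      intro hc
      exact h1 (mul_right_cancel₀ (pow_ne_zero 2 (hpos y).ne') hc)
    · refine ⟨v, ⟨v, Algebra.subset_adjoin (by simp), rfl⟩, ?_⟩
      simp only [hv, ContinuousMap.coe_mk]
      intro hc
      rcases lt_or_gt_of_ne h2 with h | h
      · exact absurd hc (ne_of_lt (pow_lt_pow_left₀ h (hpos x).le (by norm_num)))
      · exact absurd hc.symm (ne_of_lt (pow_lt_pow_left₀ h (hpos y).le (by norm_num)))
  -- integrability of products
  have hfi : ∀ f : C(K, ℝ), Integrable (fun x => f x * G x) μX := fun f => hint (f * G)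
  -- monomial moments vanish
  have hmono : ∀ a b : ℕ, ∫ x, ((u ^ a * v ^ b : C(K, ℝ)) x) * G x ∂μX = 0 := by
    intro a b
    have h1 : (fun x : K => ((u ^ a * v ^ b : C(K, ℝ)) x) * G x)
        = fun x : K => (fun σ : ℝ × ℝ =>
            σ.1 ^ a * σ.2 ^ (2 * a + 4 * (b + 1)) * ψ σ) (x : ℝ × ℝ) := by
      funext x
      simp only [ContinuousMap.mul_apply, ContinuousMap.pow_apply, hu, hv, hG,
        ContinuousMap.coe_mk]
      ring
    rw [h1, hμX, integral_subtype_comap hKm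
      (fun σ : ℝ × ℝ => σ.1 ^ a * σ.2 ^ (2 * a + 4 * (b + 1)) * ψ σ)]
    exact hmom a (b + 1) (by omega)
  -- all elements of A have vanishing integral against G
  have hA0 : ∀ f ∈ A, ∫ x, f x * G x ∂μX = 0 := by
    intro f hf
    rw [hA] at hf
    rw [← Subalgebra.mem_toSubmodule, Algebra.adjoin_eq_span] at hf
    induction hf using Submodule.span_induction with
    | mem m hm =>
      have : ∃ a b : ℕ, m = u ^ a * v ^ b := by
        induction hm using Submonoid.closure_induction with
        | mem z hz =>
          rcases hz with rfl | rfl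
          · exact ⟨1, 0, by ring⟩
          · exact ⟨0, 1, by ring⟩
        | one => exact ⟨0, 0, by ring⟩
        | mul z w _ _ hz hw =>
          obtain ⟨a, b, rfl⟩ := hz
          obtain ⟨c, d, rfl⟩ := hw
          exact ⟨a + c, b + d, by ring⟩
      obtain ⟨a, b, rfl⟩ := this
      exact hmono a b
    | zero => simp
    | add p q _ _ hp hq =>
      have : (fun x : K => (p + q) x * G x) = fun x => p x * G x + q x * G x := by
        funext x; simp [mul_comm]; ring
      rw [this, integral_add (hfi p) (hfi q), hp, hq, add_zero]
    | smul c p _ hp =>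
      have : (fun x : K => (c • p) x * G x) = fun x => c * (p x * G x) := by
        funext x; simp; ring
      rw [this, integral_const_mul, hp, mul_zero]
  -- the integral of G² vanishes
  have key : ∫ x, G x * G x ∂μX = 0 := by
    set I := ∫ x, G x * G x ∂μX with hI
    set C := ∫ x, |G x| ∂μX with hC
    have hI0 : 0 ≤ I := by
      rw [hI]; exact integral_nonneg fun x => mul_self_nonneg _
    have hC0 : 0 ≤ C := by
      rw [hC]; exact integral_nonneg fun x => abs_nonneg _
    clear_value I C
    have hle : ∀ ε > (0 : ℝ), I ≤ ε * C := by
      intro ε hε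
      obtain ⟨f, hf⟩ :=
        ContinuousMap.exists_mem_subalgebra_near_continuousMap_of_separatesPoints A hsep G ε hε
      have h0 := hA0 f f.2
      have hIeq : I = ∫ x, (G x - (f : C(K, ℝ)) x) * G x ∂μX := by
        have heq : (fun x : K => (G x - (f : C(K, ℝ)) x) * G x)
            = fun x => G x * G x - (f : C(K, ℝ)) x * G x := by
          funext x; ring
        rw [heq, integral_sub (hfi G) (hfi (f : C(K, ℝ))), h0, sub_zero, hI]
      have hb : ∀ x : K, |(G x - (f : C(K, ℝ)) x) * G x| ≤ ε * |G x| := by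
        intro x
        rw [abs_mul]
        refine mul_le_mul_of_nonneg_right ?_ (abs_nonneg _)
        have h1 : |G x - (f : C(K, ℝ)) x| = ‖((f : C(K, ℝ)) - G) x‖ := by
          simp [Real.norm_eq_abs, abs_sub_comm]
        rw [h1]
        exact le_of_lt (lt_of_le_of_lt (ContinuousMap.norm_coe_le_norm _ x) hf)
      have h2 : I ≤ ∫ x, |(G x - (f : C(K, ℝ)) x) * G x| ∂μX := by
        rw [hIeq]
        have hn := norm_integral_le_integral_norm (μ := μX)
          (fun x : K => (G x - (f : C(K, ℝ)) x) * G x)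
        simp only [Real.norm_eq_abs] at hn
        exact le_trans (le_abs_self _) hn
      have h3 : ∫ x, |(G x - (f : C(K, ℝ)) x) * G x| ∂μX ≤ ∫ x, ε * |G x| ∂μX := by
        refine integral_mono ?_ ?_ hb
        · exact (show Integrable (fun x : K => ((G - (f : C(K, ℝ))) * G) x) μX from
            hint _).abs
        · exact ((hint G).abs.const_mul ε)
      calc I ≤ ∫ x, |(G x - (f : C(K, ℝ)) x) * G x| ∂μX := h2
        _ ≤ ∫ x, ε * |G x| ∂μX := h3
        _ = ε * C := by rw [integral_const_mul, hC]
    by_contra hne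
    have hIpos : 0 < I := lt_of_le_of_ne hI0 (Ne.symm hne)
    rcases eq_or_lt_of_le hC0 with hCz | hCpos
    · have := hle 1 one_pos
      rw [← hCz] at this
      linarith
    · have h := hle (I / (2 * C)) (by positivity)
      have : I / (2 * C) * C = I / 2 := by field_simp
      rw [this] at h
      linarith
  -- transfer to a set integral over K
  set H : ℝ × ℝ → ℝ := fun σ => (σ.2 ^ 4 * ψ σ) ^ 2 with hHdef
  have hHc : Continuous H := (((continuous_snd.pow 4).mul hψ).pow 2)
  have keyH : ∫ σ in K, H σ = 0 := by
    have h1 : (fun x : K => G x * G x) = fun x : K => H (x : ℝ × ℝ) := by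
      funext x
      simp only [hG, ContinuousMap.coe_mk, hHdef]
      ring
    rw [h1, hμX, integral_subtype_comap hKm H] at key
    exact key
  have hHint : IntegrableOn H K := hHc.continuousOn.integrableOn_compact hKc
  have hae : (fun σ => H σ) =ᵐ[volume.restrict K] 0 := by
    have := (integral_eq_zero_iff_of_nonneg (μ := volume.restrict K)
      (fun σ => sq_nonneg _) hHint).mp keyH
    exact this
  have hKcl : K ⊆ closure (interior K) := by
    rw [hK, interior_prod_eq, interior_Icc, interior_Icc, closure_prod_eq,
      closure_Ioo hab₁.ne, closure_Ioo hab₂.ne]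
  have hEq : Set.EqOn H 0 K :=
    Measure.eqOn_of_ae_eq hae hHc.continuousOn continuousOn_const hKcl
  intro σ hσ
  have hH0 : (σ.2 ^ 4 * ψ σ) ^ 2 = 0 := hEq hσ
  have h2pos : 0 < σ.2 := lt_of_lt_of_le ha₂ (Set.mem_prod.mp hσ).2.1
  have : σ.2 ^ 4 * ψ σ = 0 := by
    have := sq_eq_zero_iff.mp hH0
    exact this
  rcases mul_eq_zero.mp this with h | h
  · exact absurd h (by positivity)
  · exact h
end
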